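/- There exists a universal constant c > 0 such that the following holds: for any two matroids M' = (V, I') and M'' = (V, I'') over a common finite ground set V, any common independent set S ∈ I' ∩ I'', and any positive integer d, if the length of every (s, t)-path in the exchange graph G(S) is at least d (in particular, if d(s, t) ≥ d), then |S| ≥ (1 − c/d)·r, where r is the maximum size of a common independent set in I' ∩ I''. -/

import Mathlib

/-- A matroid on a finite ground set `V`, given by its family of independent sets. -/
structure FinMatroid (V : Type*) [DecidableEq V] [Fintype V] where
  Indep : Finset V → Prop
  indep_empty : Indep ∅
  indep_subset : ∀ ⦃S T : Finset V⦄, Indep S → T ⊆ S → Indep T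
  indep_aug : ∀ ⦃S T : Finset V⦄, Indep S → Indep T → T.card < S.card →
    ∃ x ∈ S \ T, Indep (insert x T)

/-- `reachIn Adj n x y` : there is a directed walk with exactly `n` edges from `x` to `y`. -/
def reachIn {α : Type*} (Adj : α → α → Prop) : ℕ → α → α → Prop
  | 0, x, y => x = y
  | n + 1, x, y => ∃ z, Adj x z ∧ reachIn Adj n z y

/-- Distance (number of edges of a shortest directed path) from `x` to `y`; `⊤` if none. -/
noncomputable def ddist {α : Type*} (Adj : α → α → Prop) (x y : α) : ℕ∞ :=
  sInf {n : ℕ∞ | ∃ m : ℕ, n = (m : ℕ∞) ∧ reachIn Adj m x y}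

/-- Vertices of the exchange graph: the ground elements plus a source `src` and a sink `snk`. -/
inductive XVert (V : Type*) where
  | elt : V → XVert V
  | src : XVert V
  | snk : XVert V

/-- The exchange graph `G(S)` of two matroids relative to a common independent set `S`. -/
def exchangeAdj {V : Type*} [DecidableEq V] [Fintype V]
    (M₁ M₂ : FinMatroid V) (S : Finset V) : XVert V → XVert V → Prop
  | XVert.elt a, XVert.elt b =>
      (a ∈ S ∧ b ∉ S ∧ M₁.Indep (insert b (S.erase a))) ∨
      (a ∉ S ∧ b ∈ S ∧ M₂.Indep (insert a (S.erase b)))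
  | XVert.src, XVert.elt b => b ∉ S ∧ M₁.Indep (insert b S)
  | XVert.elt a, XVert.snk => a ∉ S ∧ M₂.Indep (insert a S)
  | _, _ => False

section DD
variable {α : Type*} {Adj : α → α → Prop}

lemma reachIn_snoc {m : ℕ} {x y z : α} (h : reachIn Adj m x y) (hyz : Adj y z) :
    reachIn Adj (m + 1) x z := by
  induction m generalizing x with
  | zero => exact ⟨z, h ▸ hyz, rfl⟩
  | succ n ih =>
    obtain ⟨w, hw, hrest⟩ := h
    exact ⟨w, hw, ih hrest⟩

lemma ddist_le {m : ℕ} {x y : α} (h : reachIn Adj m x y) : ddist Adj x y ≤ (m : ℕ∞) :=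
  sInf_le ⟨m, rfl, h⟩

lemma exists_reach_of_ne_top {x y : α} (h : ddist Adj x y ≠ ⊤) :
    ∃ m : ℕ, reachIn Adj m x y ∧ ddist Adj x y = (m : ℕ∞) := by
  have hne : ∃ m : ℕ, reachIn Adj m x y := by
    by_contra hc
    push_neg at hc
    have : {n : ℕ∞ | ∃ m : ℕ, n = (m : ℕ∞) ∧ reachIn Adj m x y} = ∅ := by
      ext n; simp only [Set.mem_setOf_eq, Set.mem_empty_iff_false, iff_false]
      rintro ⟨m, rfl, hm⟩; exact hc m hm
    rw [ddist, this, sInf_empty] at h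
    exact h rfl
  classical
  refine ⟨Nat.find hne, Nat.find_spec hne, le_antisymm (ddist_le (Nat.find_spec hne)) ?_⟩
  refine le_sInf ?_
  rintro n ⟨m, rfl, hm⟩
  exact_mod_cast Nat.find_min' hne hm

lemma exists_reach_of_le {x y : α} {k : ℕ} (h : ddist Adj x y ≤ (k : ℕ∞)) :
    ∃ m : ℕ, m ≤ k ∧ reachIn Adj m x y ∧ ddist Adj x y = (m : ℕ∞) := by
  have hne : ddist Adj x y ≠ ⊤ := fun ht => by
    rw [ht] at h; exact (lt_irrefl _ (lt_of_le_of_lt h (by exact_mod_cast lt_top_iff_ne_top.2 (ENat.coe_ne_top k)))).elim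
  obtain ⟨m, hr, he⟩ := exists_reach_of_ne_top hne
  refine ⟨m, ?_, hr, he⟩
  rw [he] at h
  exact_mod_cast h

lemma ddist_le_adj {x y z : α} (hyz : Adj y z) :
    ddist Adj x z ≤ ddist Adj x y + 1 := by
  rcases eq_or_ne (ddist Adj x y) ⊤ with h | h
  · rw [h]; simp
  · obtain ⟨m, hr, he⟩ := exists_reach_of_ne_top h
    rw [he]
    have := ddist_le (Adj := Adj) (reachIn_snoc hr hyz)
    simpa [Nat.cast_add] using this

end DD

section Mat
variable {V : Type*} [DecidableEq V] [Fintype V]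

lemma card_le_of_spanned (M : FinMatroid V) {W Z : Finset V} (hW : M.Indep W) (hZ : M.Indep Z)
    (h : ∀ x ∈ W, x ∈ Z ∨ ¬ M.Indep (insert x Z)) : W.card ≤ Z.card := by
  by_contra h'
  push_neg at h'
  obtain ⟨x, hx, hind⟩ := M.indep_aug hW hZ h'
  rw [Finset.mem_sdiff] at hx
  rcases h x hx.1 with hc | hc
  · exact hx.2 hc
  · exact hc hind

lemma grow (M : FinMatroid V) (S : Finset V) (v : V) (hS : M.Indep S) :
    ∀ n (J : Finset V), M.Indep J → J ⊆ insert v S → J.card ≤ S.card →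
      S.card ≤ J.card + n →
      ∃ J', J ⊆ J' ∧ J' ⊆ insert v S ∧ M.Indep J' ∧ J'.card = S.card := by
  intro n
  induction n with
  | zero => intro J hJ hsub hle hge; exact ⟨J, Finset.Subset.refl J, hsub, hJ, le_antisymm hle (by omega)⟩
  | succ n ih =>
    intro J hJ hsub hle hge
    rcases eq_or_lt_of_le hle with heq | hlt
    · exact ⟨J, Finset.Subset.refl J, hsub, hJ, heq⟩
    · obtain ⟨x, hx, hind⟩ := M.indep_aug hS hJ hlt
      rw [Finset.mem_sdiff] at hx
      have hcard : (insert x J).card = J.card + 1 := Finset.card_insert_of_notMem hx.2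
      have hsub' : insert x J ⊆ insert v S := Finset.insert_subset (Finset.mem_insert_of_mem hx.1) hsub
      obtain ⟨J', h1, h2, h3, h4⟩ := ih (insert x J) hind hsub' (by rw [hcard]; omega) (by rw [hcard]; omega)
      exact ⟨J', (Finset.subset_insert x J).trans h1, h2, h3, h4⟩

/-- Claim A: the set of exchange partners spans `v`. -/
lemma claimA (M : FinMatroid V) {S : Finset V} {v : V} (hS : M.Indep S) (hv : v ∉ S)
    (hdep : ¬ M.Indep (insert v S)) {N : Finset V} (hNS : N ⊆ S)
    (hN : ∀ u ∈ S, M.Indep (insert v (S.erase u)) → u ∈ N) :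
    ¬ M.Indep (insert v N) := by
  intro hJ
  have hvN : v ∉ N := fun h => hv (hNS h)
  have hJsub : insert v N ⊆ insert v S := Finset.insert_subset_insert v hNS
  have hNne : N ≠ S := by
    rintro rfl
    exact hdep hJ
  have hNlt : N.card < S.card := Finset.card_lt_card (lt_of_le_of_ne hNS hNne)
  have hJcard : (insert v N).card = N.card + 1 := Finset.card_insert_of_notMem hvN
  obtain ⟨J', h1, h2, h3, h4⟩ := grow M S v hS S.card (insert v N) hJ hJsub (by omega) (by omega)
  have hvJ' : v ∈ J' := h1 (Finset.mem_insert_self v N)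
  have hvS : (insert v S).card = S.card + 1 := Finset.card_insert_of_notMem hv
  have hsd : ((insert v S) \ J').card = 1 := by
    rw [Finset.card_sdiff_of_subset h2]; omega
  obtain ⟨u, hu⟩ := Finset.card_eq_one.mp hsd
  have huJ' : u ∉ J' := by
    have : u ∈ (insert v S) \ J' := hu ▸ Finset.mem_singleton_self u
    exact (Finset.mem_sdiff.mp this).2
  have huS : u ∈ insert v S := by
    have : u ∈ (insert v S) \ J' := hu ▸ Finset.mem_singleton_self u
    exact (Finset.mem_sdiff.mp this).1
  have hune : u ≠ v := fun h => huJ' (h ▸ hvJ')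
  have huS' : u ∈ S := by
    rcases Finset.mem_insert.mp huS with h | h
    · exact absurd h hune
    · exact h
  have hJ'eq : J' = insert v (S.erase u) := by
    have hsub : J' ⊆ insert v (S.erase u) := by
      intro x hx
      have hxS : x ∈ insert v S := h2 hx
      have hxu : x ≠ u := fun h => huJ' (h ▸ hx)
      rcases Finset.mem_insert.mp hxS with h | h
      · exact h ▸ Finset.mem_insert_self _ _
      · exact Finset.mem_insert_of_mem (Finset.mem_erase.mpr ⟨hxu, h⟩)
    refine Finset.eq_of_subset_of_card_le hsub ?_
    rw [Finset.card_insert_of_notMem (fun h => hv (Finset.erase_subset u S h)),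
      Finset.card_erase_of_mem huS']
    omega
  have : u ∈ N := hN u huS' (hJ'eq ▸ h3)
  exact huJ' (h1 (Finset.mem_insert_of_mem this))

end Mat

section Parity
variable {V : Type*} [DecidableEq V] [Fintype V] {M₁ M₂ : FinMatroid V} {S : Finset V}

lemma reach_from_snk : ∀ (m : ℕ) (y : XVert V),
    reachIn (exchangeAdj M₁ M₂ S) m XVert.snk y → y = XVert.snk := by
  intro m
  induction m with
  | zero => intro y h; exact h.symm
  | succ n ih =>
    intro y h
    obtain ⟨z, hz, _⟩ := h
    cases z <;> exact hz.elim

lemma walk_parity : ∀ (m : ℕ) (a v : V),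
    reachIn (exchangeAdj M₁ M₂ S) m (XVert.elt a) (XVert.elt v) →
    (a ∈ S → (v ∈ S ↔ Even m)) ∧ (a ∉ S → (v ∈ S ↔ Odd m)) := by
  intro m
  induction m with
  | zero =>
    intro a v h
    have : a = v := by injection h
    subst this
    constructor
    · intro h'; simp [h']
    · intro h'; simp [h', Nat.odd_iff]
  | succ n ih =>
    intro a v h
    obtain ⟨z, hz, hrest⟩ := h
    cases z with
    | src => exact hz.elim
    | snk => exact absurd (reach_from_snk n _ hrest) (by simp)
    | elt b =>
      have ihb := ih b v hrest
      rcases hz with ⟨haS, hbS, _⟩ | ⟨haS, hbS, _⟩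
      · constructor
        · intro _
          rw [Nat.even_add_one, Nat.not_even_iff_odd]
          exact ihb.2 hbS
        · intro h'; exact absurd haS h'
      · constructor
        · intro h'; exact absurd h' haS
        · intro _
          rw [Nat.odd_add_one, Nat.not_odd_iff_even] at *
          exact ihb.1 hbS
end Parity

section Key
variable {V : Type*} [DecidableEq V] [Fintype V] {M₁ M₂ : FinMatroid V} {S : Finset V}

lemma src_parity {m : ℕ} {v : V}
    (h : reachIn (exchangeAdj M₁ M₂ S) m XVert.src (XVert.elt v)) :
    v ∈ S ↔ Even m := by
  cases m with
  | zero => exact absurd h (by intro hh; injection hh)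
  | succ n =>
    obtain ⟨z, hz, hrest⟩ := h
    cases z with
    | src => exact hz.elim
    | snk => exact hz.elim
    | elt b =>
      rw [Nat.even_add_one, ← Nat.not_even_iff_odd.symm]
      rw [← Nat.not_even_iff_odd]
      constructor
      · intro hv he
        exact ((walk_parity n b v hrest).2 hz.1).mp hv |> (Nat.not_odd_iff_even.mpr he)
      · intro hne
        exact ((walk_parity n b v hrest).2 hz.1).mpr (Nat.not_even_iff_odd.mp hne)

lemma key (hS1 : M₁.Indep S) (hS2 : M₂.Indep S) (d : ℕ)
    (hdist : (d : ℕ∞) ≤ ddist (exchangeAdj M₁ M₂ S) XVert.src XVert.snk)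
    (T : Finset V) (hT1 : M₁.Indep T) (hT2 : M₂.Indep T)
    (ℓ : ℕ) (hodd : Odd ℓ) (h1 : 1 ≤ ℓ) (hℓd : ℓ + 2 ≤ d) :
    T.card ≤ S.card +
      (S.filter (fun u =>
        ddist (exchangeAdj M₁ M₂ S) XVert.src (XVert.elt u) = ((ℓ + 1 : ℕ) : ℕ∞))).card := by
  classical
  set Adj := exchangeAdj M₁ M₂ S with hAdjdef
  set dV : V → ℕ∞ := fun v => ddist Adj XVert.src (XVert.elt v) with hdVdef
  set Z₂ := S.filter (fun u => dV u ≤ ((ℓ + 1 : ℕ) : ℕ∞)) with hZ2def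
  set Z₁ := S.filter (fun u => ((ℓ : ℕ) : ℕ∞) ≤ dV u) with hZ1def
  -- Bound for the near side (matroid M₂)
  have hb2 : (T.filter (fun v => dV v ≤ ((ℓ : ℕ) : ℕ∞))).card ≤ Z₂.card := by
    refine card_le_of_spanned M₂ (M₂.indep_subset hT2 (Finset.filter_subset _ _))
      (M₂.indep_subset hS2 (Finset.filter_subset _ _)) ?_
    intro x hx
    rw [Finset.mem_filter] at hx
    by_cases hxS : x ∈ S
    · left
      exact Finset.mem_filter.mpr ⟨hxS, le_trans hx.2 (by exact_mod_cast Nat.le_succ ℓ)⟩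
    · right
      intro hind
      have hdep : ¬ M₂.Indep (insert x S) := by
        intro hind2
        obtain ⟨m, hm, hr, _⟩ := exists_reach_of_le hx.2
        have hsnoc : reachIn Adj (m + 1) XVert.src XVert.snk :=
          reachIn_snoc hr (show Adj (XVert.elt x) XVert.snk from ⟨hxS, hind2⟩)
        have hle := ddist_le hsnoc
        have : (d : ℕ∞) ≤ ((m + 1 : ℕ) : ℕ∞) := le_trans hdist hle
        have : d ≤ m + 1 := by exact_mod_cast this
        omega
      have hNsub : (S.filter (fun u => M₂.Indep (insert x (S.erase u)))) ⊆ Z₂ := by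
        intro u hu
        rw [Finset.mem_filter] at hu
        refine Finset.mem_filter.mpr ⟨hu.1, ?_⟩
        have hedge : Adj (XVert.elt x) (XVert.elt u) := Or.inr ⟨hxS, hu.1, hu.2⟩
        have := ddist_le_adj (x := XVert.src) hedge
        refine le_trans this ?_
        calc dV x + 1 ≤ ((ℓ : ℕ) : ℕ∞) + 1 := by exact add_le_add hx.2 le_rfl
          _ = ((ℓ + 1 : ℕ) : ℕ∞) := by push_cast; ring
      have hNdep := claimA M₂ hS2 hxS hdep (Finset.filter_subset _ _)
        (fun u hu hind => Finset.mem_filter.mpr ⟨hu, hind⟩)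
      exact hNdep (M₂.indep_subset hind (Finset.insert_subset_insert x hNsub))
  -- Bound for the far side (matroid M₁)
  have hb1 : (T.filter (fun v => ¬ dV v ≤ ((ℓ : ℕ) : ℕ∞))).card ≤ Z₁.card := by
    refine card_le_of_spanned M₁ (M₁.indep_subset hT1 (Finset.filter_subset _ _))
      (M₁.indep_subset hS1 (Finset.filter_subset _ _)) ?_
    intro x hx
    rw [Finset.mem_filter] at hx
    by_cases hxS : x ∈ S
    · left
      exact Finset.mem_filter.mpr ⟨hxS, le_of_lt (lt_of_not_ge hx.2)⟩
    · right
      intro hind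
      have hdep : ¬ M₁.Indep (insert x S) := by
        intro hind1
        have hedge : Adj XVert.src (XVert.elt x) := ⟨hxS, hind1⟩
        have hr : reachIn Adj 1 XVert.src (XVert.elt x) := ⟨XVert.elt x, hedge, rfl⟩
        have := ddist_le hr
        exact hx.2 (le_trans this (by exact_mod_cast h1))
      have hNsub : (S.filter (fun u => M₁.Indep (insert x (S.erase u)))) ⊆ Z₁ := by
        intro u hu
        rw [Finset.mem_filter] at hu
        refine Finset.mem_filter.mpr ⟨hu.1, ?_⟩
        have hedge : Adj (XVert.elt u) (XVert.elt x) := Or.inl ⟨hu.1, hxS, hu.2⟩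
        have hxd := ddist_le_adj (x := XVert.src) hedge
        -- dV x ≤ dV u + 1, and ℓ < dV x
        have hlt : ((ℓ : ℕ) : ℕ∞) < dV x := lt_of_not_ge hx.2
        rcases eq_or_ne (dV u) ⊤ with htop | htop
        · rw [htop]; exact le_top
        · obtain ⟨k, hk⟩ := WithTop.ne_top_iff_exists.mp htop
          have hxd' : dV x ≤ dV u + 1 := hxd
          rw [← hk] at hxd'
          have h2 : ((ℓ : ℕ) : ℕ∞) < ((k : ℕ) : ℕ∞) + 1 := lt_of_lt_of_le hlt hxd'
          have h3 : ((ℓ : ℕ) : ℕ∞) < ((k + 1 : ℕ) : ℕ∞) := by push_cast; push_cast at h2; exact h2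
          have h4 : ℓ < k + 1 := by exact_mod_cast h3
          rw [← hk]
          exact Nat.cast_le.mpr (Nat.lt_succ_iff.mp h4)
      have hNdep := claimA M₁ hS1 hxS hdep (Finset.filter_subset _ _)
        (fun u hu hind => Finset.mem_filter.mpr ⟨hu, hind⟩)
      exact hNdep (M₁.indep_subset hind (Finset.insert_subset_insert x hNsub))
  -- combine
  have hsplit : T.card = (T.filter (fun v => dV v ≤ ((ℓ : ℕ) : ℕ∞))).card
      + (T.filter (fun v => ¬ dV v ≤ ((ℓ : ℕ) : ℕ∞))).card :=
    (Finset.card_filter_add_card_filter_not _).symm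
  have hcards : Z₂.card + Z₁.card = (Z₂ ∪ Z₁).card + (Z₂ ∩ Z₁).card :=
    (Finset.card_union_add_card_inter Z₂ Z₁).symm
  have hU : (Z₂ ∪ Z₁) ⊆ S := Finset.union_subset (Finset.filter_subset _ _) (Finset.filter_subset _ _)
  have hI : (Z₂ ∩ Z₁) ⊆ S.filter (fun u => dV u = ((ℓ + 1 : ℕ) : ℕ∞)) := by
    intro u hu
    rw [Finset.mem_inter, hZ2def, hZ1def, Finset.mem_filter, Finset.mem_filter] at hu
    refine Finset.mem_filter.mpr ⟨hu.1.1, ?_⟩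
    obtain ⟨m, hm, hr, heq⟩ := exists_reach_of_le hu.1.2
    have hml : ℓ ≤ m := by
      have := le_trans hu.2.2 (le_of_eq heq)
      exact_mod_cast this
    have : m ≠ ℓ := by
      intro hcontra
      subst hcontra
      have := (src_parity hr).mp hu.1.1
      exact (Nat.not_even_iff_odd.mpr hodd) this
    have hm1 : m = ℓ + 1 := by omega
    have heq' : dV u = ((m : ℕ) : ℕ∞) := heq
    rw [heq', hm1]
  calc T.card = _ := hsplit
    _ ≤ Z₂.card + Z₁.card := Nat.add_le_add hb2 hb1
    _ = (Z₂ ∪ Z₁).card + (Z₂ ∩ Z₁).card := hcards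
    _ ≤ S.card + (S.filter (fun u => dV u = ((ℓ + 1 : ℕ) : ℕ∞))).card :=
        Nat.add_le_add (Finset.card_le_card hU) (Finset.card_le_card hI)

end Key

/-- There is a universal constant `c > 0` such that: if every `(s,t)`-path of the exchange
graph `G(S)` has length at least `d`, then `|S| ≥ (1 − c/d) · r`, where `r` is the maximum
size of a common independent set. -/
theorem distance_implies_large_common_independent_set :
    ∃ c : ℝ, 0 < c ∧
      ∀ (V : Type) [DecidableEq V] [Fintype V]
        (M₁ M₂ : FinMatroid V) (S : Finset V),
        M₁.Indep S → M₂.Indep S →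
        ∀ d : ℕ, 0 < d →
        (d : ℕ∞) ≤ ddist (exchangeAdj M₁ M₂ S) XVert.src XVert.snk →
        (1 - c / (d : ℝ)) *
            ((sSup {n : ℕ | ∃ T : Finset V, M₁.Indep T ∧ M₂.Indep T ∧ T.card = n} : ℕ) : ℝ)
          ≤ (S.card : ℝ) := by
  refine ⟨3, by norm_num, ?_⟩
  intro V _ _ M₁ M₂ S hS1 hS2 d hd hdist
  classical
  set rset := {n : ℕ | ∃ T : Finset V, M₁.Indep T ∧ M₂.Indep T ∧ T.card = n} with hrset
  have hne : rset.Nonempty := ⟨0, ∅, M₁.indep_empty, M₂.indep_empty, Finset.card_empty⟩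
  have hbdd : BddAbove rset := ⟨Fintype.card V, by
    rintro n ⟨T, -, -, rfl⟩
    exact le_trans (Finset.card_le_univ T) (le_of_eq (Finset.card_univ))⟩
  obtain ⟨T, hT1, hT2, hTc⟩ := Nat.sSup_mem hne hbdd
  set r := sSup rset with hrdef
  by_cases hd3 : d < 3
  · have hd1 : (1:ℝ) ≤ (d:ℝ) := by exact_mod_cast hd
    have hdr : (d:ℝ) ≤ 3 := by exact_mod_cast (show d ≤ 3 by omega)
    have h0 : (1:ℝ) - 3/(d:ℝ) ≤ 0 := by
      have : (1:ℝ) ≤ 3/(d:ℝ) := (one_le_div (by linarith)).mpr hdr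
      linarith
    calc (1 - 3/(d:ℝ)) * r ≤ 0 := mul_nonpos_of_nonpos_of_nonneg h0 (Nat.cast_nonneg r)
      _ ≤ (S.card : ℝ) := Nat.cast_nonneg _
  · push_neg at hd3
    set m := (d-1)/2 with hm
    have hm1 : 1 ≤ m := by omega
    set a : ℕ → ℕ := fun i => (S.filter (fun u =>
      ddist (exchangeAdj M₁ M₂ S) XVert.src (XVert.elt u) = ((2*i+1+1 : ℕ) : ℕ∞))).card with hadef
    have hkey : ∀ i ∈ Finset.range m, r ≤ S.card + a i := by
      intro i hi
      rw [Finset.mem_range] at hi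
      have := key hS1 hS2 d hdist T hT1 hT2 (2*i+1) (Nat.odd_iff.mpr (by omega))
        (by omega) (by omega)
      rw [hTc] at this
      exact this
    have hdisj : ∀ i ∈ Finset.range m, ∀ j ∈ Finset.range m, i ≠ j →
        Disjoint (S.filter (fun u =>
          ddist (exchangeAdj M₁ M₂ S) XVert.src (XVert.elt u) = ((2*i+1+1 : ℕ) : ℕ∞)))
        (S.filter (fun u =>
          ddist (exchangeAdj M₁ M₂ S) XVert.src (XVert.elt u) = ((2*j+1+1 : ℕ) : ℕ∞))) := by
      intro i _ j _ hij
      rw [Finset.disjoint_left]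
      intro x hx hx'
      rw [Finset.mem_filter] at hx hx'
      have h1 : ((2*i+1+1 : ℕ) : ℕ∞) = ((2*j+1+1 : ℕ) : ℕ∞) := hx.2.symm.trans hx'.2
      have h2 : 2*i+1+1 = 2*j+1+1 := by exact_mod_cast h1
      omega
    have hsum : ∑ i ∈ Finset.range m, a i ≤ S.card := by
      rw [hadef, ← Finset.card_biUnion hdisj]
      exact Finset.card_le_card (Finset.biUnion_subset.mpr (fun i _ => Finset.filter_subset _ _))
    have hmr : m * r ≤ m * S.card + S.card := by
      calc m * r = ∑ _i ∈ Finset.range m, r := by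
            rw [Finset.sum_const, Finset.card_range, smul_eq_mul]
        _ ≤ ∑ i ∈ Finset.range m, (S.card + a i) := Finset.sum_le_sum hkey
        _ = m * S.card + ∑ i ∈ Finset.range m, a i := by
            rw [Finset.sum_add_distrib, Finset.sum_const, Finset.card_range, smul_eq_mul]
        _ ≤ m * S.card + S.card := Nat.add_le_add_left hsum _
    have hdm : d ≤ 3 * (m + 1) := by omega
    have hx : (m:ℝ) * r ≤ (m:ℝ) * S.card + S.card := by exact_mod_cast hmr
    have hdpos : (0:ℝ) < d := by exact_mod_cast hd
    have hmpos : (0:ℝ) < (m:ℝ) + 1 := by positivity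
    have hfrac : 1/((m:ℝ)+1) ≤ 3/(d:ℝ) := by
      rw [div_le_div_iff₀ hmpos hdpos]
      have : (d:ℝ) ≤ 3*((m:ℝ)+1) := by exact_mod_cast hdm
      linarith
    have hr0 : (0:ℝ) ≤ (r:ℝ) := Nat.cast_nonneg r
    calc (1 - 3/(d:ℝ)) * r ≤ (1 - 1/((m:ℝ)+1)) * r := by
          apply mul_le_mul_of_nonneg_right _ hr0
          linarith
      _ = (m:ℝ) * r / ((m:ℝ)+1) := by
          field_simp
          ring
      _ ≤ (S.card : ℝ) := by
          rw [div_le_iff₀ hmpos]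
          linarith
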